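/- arXiv:1302.2931 — 5 statements merged into one kernel-verified Lean document; each statement's English description precedes it below -/
import Mathlib

section
/- Let V be a finite-dimensional vector space over a field K, and let A and B be alternating bilinear forms on V. Regard A and B as linear maps V → V* (v ↦ A(v,·)) and suppose that the kernels of A and B have the same finite dimension. Then there exists a linear automorphism g : V ≃ V such that B(x,y) = A(g x, g y) for all x, y ∈ V. -/
/-! A nonzero alternating form `A` has a hyperbolic pair `a, b` with `A a b = 1`. Its span `P` has
Gram matrix `!![0, 1; -1, 0]`, so `A` is nondegenerate on `P`, `V = P ⊕ P^⊥`, and the restriction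
of `A` to `P^⊥` has the same kernel as `A`. Any two hyperbolic planes are isometric, so induction
on the dimension matches `(V, A)` with `(V, B)` summand by summand. -/

open Module Submodule

namespace LinearMap.BilinForm

variable {K V₁ V₂ : Type*} [Field K] [AddCommGroup V₁] [Module K V₁] [AddCommGroup V₂]
  [Module K V₂] {A : LinearMap.BilinForm K V₁} {B : LinearMap.BilinForm K V₂}

theorem exists_apply_eq_one (hA : A ≠ 0) : ∃ v : Fin 2 → V₁, A (v 0) (v 1) = 1 := by
  obtain ⟨a, b, hab⟩ : ∃ a b, A a b ≠ 0 := by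
    by_contra! h
    exact hA (ext h)
  exact ⟨![a, (A a b)⁻¹ • b], by simp [hab]⟩

theorem eq_zero_iff_finrank_ker [FiniteDimensional K V₁] :
    A = 0 ↔ finrank K (ker A) = finrank K V₁ := by
  rw [← ker_eq_top, Submodule.eq_top_iff_finrank_eq]

theorem apply_eq_apply_basis_equiv {ι : Type*} (b₁ : Basis ι K V₁) (b₂ : Basis ι K V₂)
    (h : ∀ i j, B (b₂ i) (b₂ j) = A (b₁ i) (b₁ j)) (x y : V₂) :
    B x y = A (b₂.equiv b₁ (.refl ι) x) (b₂.equiv b₁ (.refl ι) y) := by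
  have hB : B = A.compl₁₂ (b₂.equiv b₁ (.refl ι)).toLinearMap
      (b₂.equiv b₁ (.refl ι)).toLinearMap :=
    LinearMap.ext_basis b₂ b₂ fun i j => by simpa using h i j
  exact congr($hB x y)

theorem IsRefl.apply_prodEquivOfIsCompl (hA : A.IsRefl) {p q : Submodule K V₁}
    (h : IsCompl p q) (hpq : q ≤ A.orthogonal p) (u v : p × q) :
    A (prodEquivOfIsCompl p q h u) (prodEquivOfIsCompl p q h v) =
      A.restrict p u.1 v.1 + A.restrict q u.2 v.2 := by
  have h₁₂ : A u.1 v.2 = 0 := hpq v.2.2 u.1 u.1.2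
  have h₂₁ : A u.2 v.1 = 0 := hA _ _ (hpq u.2.2 v.1 v.1.2)
  simp only [coe_prodEquivOfIsCompl', map_add, LinearMap.add_apply, h₁₂, h₂₁, add_zero,
    zero_add, restrict_apply, domRestrict_apply]

theorem IsRefl.exists_isometry_of_isCompl (hA : A.IsRefl) (hB : B.IsRefl)
    {p₁ q₁ : Submodule K V₁} {p₂ q₂ : Submodule K V₂} (h₁ : IsCompl p₁ q₁) (h₂ : IsCompl p₂ q₂)
    (hpq₁ : q₁ ≤ A.orthogonal p₁) (hpq₂ : q₂ ≤ B.orthogonal p₂)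
    (f : p₂ ≃ₗ[K] p₁) (hf : ∀ x y, B.restrict p₂ x y = A.restrict p₁ (f x) (f y))
    (g : q₂ ≃ₗ[K] q₁) (hg : ∀ x y, B.restrict q₂ x y = A.restrict q₁ (g x) (g y)) :
    ∃ e : V₂ ≃ₗ[K] V₁, ∀ x y, B x y = A (e x) (e y) := by
  let e₁ := prodEquivOfIsCompl p₁ q₁ h₁
  let e₂ := prodEquivOfIsCompl p₂ q₂ h₂
  refine ⟨e₂.symm ≪≫ₗ f.prodCongr g ≪≫ₗ e₁, fun x y => ?_⟩
  obtain ⟨u, rfl⟩ := e₂.surjective x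
  obtain ⟨v, rfl⟩ := e₂.surjective y
  simp only [LinearEquiv.trans_apply, LinearEquiv.symm_apply_apply, LinearEquiv.prodCongr_apply]
  rw [hB.apply_prodEquivOfIsCompl h₂ hpq₂, hA.apply_prodEquivOfIsCompl h₁ hpq₁, hf, hg]

theorem IsRefl.finrank_ker_restrict_orthogonal (hA : A.IsRefl) {P : Submodule K V₁}
    (h : IsCompl P (A.orthogonal P)) :
    finrank K (ker (A.restrict (A.orthogonal P))) = finrank K (ker A) := by
  have hle : ker A ≤ A.orthogonal P := orthogonal_top_eq_ker hA ▸ orthogonal_le le_top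
  rw [ker_restrict_eq_of_codisjoint h.codisjoint.symm fun x hx y hy => hA _ _ (hx y hy)]
  exact (comapSubtypeEquivOfLe hle).finrank_eq

section HyperbolicPair

variable {v : Fin 2 → V₁} {w : Fin 2 → V₂}

theorem IsAlt.apply_eq_of_apply_eq_one (hA : A.IsAlt) (hv : A (v 0) (v 1) = 1) (i j : Fin 2) :
    A (v i) (v j) = !![0, 1; -1, 0] i j := by
  fin_cases i <;> fin_cases j <;> simp [hA.self_eq_zero, hv, ← hA.neg_eq]

theorem IsAlt.linearIndependent_of_apply_eq_one (hA : A.IsAlt) (hv : A (v 0) (v 1) = 1) :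
    LinearIndependent K v := by
  refine linearIndependent_fin2.mpr ⟨fun h => ?_, fun c h => ?_⟩
  · simp [h] at hv
  · simp [← h, hA.self_eq_zero] at hv

theorem IsAlt.isCompl_span_orthogonal [FiniteDimensional K V₁] (hA : A.IsAlt)
    (hv : A (v 0) (v 1) = 1) :
    IsCompl (span K (Set.range v)) (A.orthogonal (span K (Set.range v))) := by
  let b := Basis.span (hA.linearIndependent_of_apply_eq_one hv)
  refine isCompl_orthogonal_of_restrict_nondegenerate hA.isRefl
    ((nondegenerate_iff_det_ne_zero b).mpr ?_)
  simp [Matrix.det_fin_two, toMatrix_apply, b, Basis.span_apply, hA.apply_eq_of_apply_eq_one hv]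

theorem IsAlt.finrank_orthogonal_span_add_two [FiniteDimensional K V₁] (hA : A.IsAlt)
    (hv : A (v 0) (v 1) = 1) :
    finrank K (A.orthogonal (span K (Set.range v))) + 2 = finrank K V₁ := by
  rw [← Submodule.finrank_add_eq_of_isCompl (hA.isCompl_span_orthogonal hv),
    finrank_span_eq_card (hA.linearIndependent_of_apply_eq_one hv), Fintype.card_fin, add_comm]

theorem IsAlt.exists_isometry_span (hA : A.IsAlt) (hv : A (v 0) (v 1) = 1) (hB : B.IsAlt)
    (hw : B (w 0) (w 1) = 1) :
    ∃ f : span K (Set.range w) ≃ₗ[K] span K (Set.range v),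
      ∀ x y, B.restrict _ x y = A.restrict _ (f x) (f y) :=
  ⟨_, apply_eq_apply_basis_equiv (Basis.span (hA.linearIndependent_of_apply_eq_one hv))
    (Basis.span (hB.linearIndependent_of_apply_eq_one hw)) fun i j => by
      simp [Basis.span_apply, hA.apply_eq_of_apply_eq_one hv, hB.apply_eq_of_apply_eq_one hw]⟩

end HyperbolicPair

theorem IsAlt.exists_isometry_of_finrank_eq [FiniteDimensional K V₁] [FiniteDimensional K V₂]
    (hA : A.IsAlt) (hB : B.IsAlt) (hdim : finrank K V₁ = finrank K V₂)
    (hker : finrank K (ker A) = finrank K (ker B)) :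
    ∃ g : V₂ ≃ₗ[K] V₁, ∀ x y, B x y = A (g x) (g y) := by
  induction hn : finrank K V₁ using Nat.strong_induction_on generalizing V₁ V₂ with
  | _ n ih =>
  by_cases hA₀ : A = 0
  · have hB₀ : B = 0 := by
      rw [eq_zero_iff_finrank_ker] at hA₀ ⊢
      rw [← hker, hA₀, hdim]
    exact ⟨LinearEquiv.ofFinrankEq V₂ V₁ hdim.symm, by simp [hA₀, hB₀]⟩
  have hB₀ : B ≠ 0 := by
    rwa [ne_eq, eq_zero_iff_finrank_ker, ← hker, ← hdim, ← eq_zero_iff_finrank_ker]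
  obtain ⟨v, hv⟩ := exists_apply_eq_one hA₀
  obtain ⟨w, hw⟩ := exists_apply_eq_one hB₀
  have hc₁ := hA.isCompl_span_orthogonal hv
  have hc₂ := hB.isCompl_span_orthogonal hw
  have h₁ := hA.finrank_orthogonal_span_add_two hv
  have h₂ := hB.finrank_orthogonal_span_add_two hw
  obtain ⟨f, hf⟩ := hA.exists_isometry_span hv hB hw
  obtain ⟨g, hg⟩ := ih _ (by omega) (A := A.restrict (A.orthogonal (span K (Set.range v))))
    (B := B.restrict (B.orthogonal (span K (Set.range w))))
    (fun x => hA.self_eq_zero x) (fun x => hB.self_eq_zero x) (by omega)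
    (by rw [hA.isRefl.finrank_ker_restrict_orthogonal hc₁,
      hB.isRefl.finrank_ker_restrict_orthogonal hc₂, hker]) rfl
  exact hA.isRefl.exists_isometry_of_isCompl hB.isRefl hc₁ hc₂ le_rfl le_rfl f hf g hg

end LinearMap.BilinForm

/-- Two alternating bilinear forms on a finite-dimensional vector space over a
field `K` whose kernels have the same dimension are equivalent under `GL(V)`. -/
theorem stmt_1 (K V : Type*) [Field K] [AddCommGroup V] [Module K V]
    [FiniteDimensional K V]
    (A B : V →ₗ[K] V →ₗ[K] K)
    (hA : ∀ v : V, A v v = 0) (hB : ∀ v : V, B v v = 0)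
    (hker : Module.finrank K (LinearMap.ker A) = Module.finrank K (LinearMap.ker B)) :
    ∃ g : V ≃ₗ[K] V, ∀ x y : V, B x y = A (g x) (g y) :=
  LinearMap.BilinForm.IsAlt.exists_isometry_of_finrank_eq hA hB rfl hker
end

section
/- Let X be a topological space, let n ≥ 0, and let P, Q : X → Matrix (Fin (2n+1)) (Fin (2n+1)) ℂ be continuous maps such that P(x) and Q(x) are skew-symmetric matrices for every x ∈ X. Suppose that at a point x₀ ∈ X one has rank(μ P(x₀) + ν Q(x₀)) = 2n for every (μ, ν) ∈ ℂ² with (μ, ν) ≠ (0,0). Then there exists an open neighborhood U of x₀ such that rank(μ P(x) + ν Q(x)) = 2n for every x ∈ U and every (μ, ν) ∈ ℂ² \ {(0,0)}. -/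
open Matrix

/-- Sandwiching by invertible matrices preserves being nonzero. -/
lemma aux_mul_mul_eq_zero_iff {N : Type*} [Fintype N] [DecidableEq N]
    (U V Xm : Matrix N N ℂ) (hU : IsUnit U.det) (hV : IsUnit V.det) :
    U * Xm * V = 0 ↔ Xm = 0 := by
  constructor
  · intro h
    have hX : U⁻¹ * (U * Xm * V) * V⁻¹ = Xm := by
      simp only [Matrix.mul_assoc]
      rw [Matrix.mul_nonsing_inv _ hV, Matrix.mul_one, ← Matrix.mul_assoc,
        Matrix.nonsing_inv_mul _ hU, Matrix.one_mul]
    rw [← hX, h, Matrix.mul_zero, Matrix.zero_mul]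
  · rintro rfl
    rw [Matrix.mul_zero, Matrix.zero_mul]

/-- A singular `(m+1)×(m+1)` complex matrix has rank `m` iff its adjugate is nonzero. -/
lemma aux_rank_eq_iff_adjugate_ne_zero (m : ℕ) (M : Matrix (Fin (m + 1)) (Fin (m + 1)) ℂ)
    (hdet : M.det = 0) : M.rank = m ↔ adjugate M ≠ 0 := by
  classical
  obtain ⟨L, L', D, hM⟩ := Matrix.Pivot.exists_list_transvec_mul_diagonal_mul_list_transvec M
  set A := (L.map Matrix.TransvectionStruct.toMatrix).prod with hA
  set B := (L'.map Matrix.TransvectionStruct.toMatrix).prod with hB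
  have hAdet : A.det = 1 := Matrix.TransvectionStruct.det_toMatrix_prod L
  have hBdet : B.det = 1 := Matrix.TransvectionStruct.det_toMatrix_prod L'
  have hAu : IsUnit A.det := by rw [hAdet]; exact isUnit_one
  have hBu : IsUnit B.det := by rw [hBdet]; exact isUnit_one
  -- rank of M equals rank of the diagonal matrix
  have hrank : M.rank = (diagonal D).rank := by
    rw [hM, Matrix.rank_mul_eq_left_of_isUnit_det _ _ hBu,
      Matrix.rank_mul_eq_right_of_isUnit_det _ _ hAu]
  -- determinant of M equals product of D
  have hdetD : ∏ i, D i = 0 := by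
    have : M.det = ∏ i, D i := by
      rw [hM, Matrix.det_mul, Matrix.det_mul, hAdet, hBdet, Matrix.det_diagonal,
        one_mul, mul_one]
    rw [← this, hdet]
  obtain ⟨i₀, -, hi₀⟩ := Finset.prod_eq_zero_iff.mp hdetD
  -- adjugate of M is nonzero iff adjugate of the diagonal matrix is nonzero
  have hadjAu : IsUnit (adjugate A).det := by
    rw [Matrix.det_adjugate, hAdet, one_pow]; exact isUnit_one
  have hadjBu : IsUnit (adjugate B).det := by
    rw [Matrix.det_adjugate, hBdet, one_pow]; exact isUnit_one
  have hadj : adjugate M = adjugate B * adjugate (diagonal D) * adjugate A := by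
    rw [hM, Matrix.adjugate_mul_distrib, Matrix.adjugate_mul_distrib, ← Matrix.mul_assoc]
  have hadjiff : adjugate M ≠ 0 ↔ adjugate (diagonal D) ≠ 0 := by
    rw [hadj, not_iff_not, aux_mul_mul_eq_zero_iff _ _ _ hadjBu hadjAu]
  rw [hadjiff, hrank, Matrix.rank_diagonal]
  -- now a purely combinatorial statement about D
  rw [Matrix.adjugate_diagonal]
  have hdiagzero : ∀ w : Fin (m + 1) → ℂ, diagonal w = 0 ↔ w = 0 := by
    intro w
    constructor
    · intro h
      funext i
      have := congrFun (congrFun h i) i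
      simpa using this
    · rintro rfl; exact Matrix.diagonal_zero
  rw [Ne, hdiagzero, funext_iff, not_forall]
  set z := Finset.univ.filter (fun i => D i = 0) with hz
  set nz := Finset.univ.filter (fun i => D i ≠ 0) with hnz
  have hcardsub : Fintype.card {i // D i ≠ 0} = nz.card := Fintype.card_subtype _
  have hsum : nz.card + z.card = m + 1 := by
    have hzc : z = nzᶜ := by
      ext i
      simp [hz, hnz]
    have hle : nz.card ≤ m + 1 := by
      have := Finset.card_le_univ nz
      simpa using this
    rw [hzc, Finset.card_compl, Fintype.card_fin]
    omega
  have hi₀z : i₀ ∈ z := by simp [hz, hi₀]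
  have hzpos : 1 ≤ z.card := Finset.card_pos.mpr ⟨i₀, hi₀z⟩
  constructor
  · intro hrk
    -- z has exactly one element, namely i₀
    have hzcard : z.card = 1 := by
      rw [hcardsub] at hrk
      omega
    obtain ⟨a, ha⟩ := Finset.card_eq_one.mp hzcard
    have hai₀ : a = i₀ := by
      have := hi₀z
      rw [ha] at this
      exact (Finset.mem_singleton.mp this).symm
    refine ⟨i₀, ?_⟩
    simp only [Pi.zero_apply]
    apply Finset.prod_ne_zero_iff.mpr
    intro j hj
    intro hDj
    have hjz : j ∈ z := by simp [hz, hDj]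
    rw [ha, hai₀, Finset.mem_singleton] at hjz
    exact (Finset.mem_erase.mp hj).1 hjz
  · rintro ⟨i, hi⟩
    simp only [Pi.zero_apply] at hi
    have hDj : ∀ j ∈ Finset.univ.erase i, D j ≠ 0 := by
      intro j hj hDj
      exact hi (Finset.prod_eq_zero hj hDj)
    have hzsub : z ⊆ {i} := by
      intro j hj
      rw [Finset.mem_singleton]
      by_contra hji
      exact hDj j (Finset.mem_erase.mpr ⟨hji, Finset.mem_univ j⟩)
        (by simpa [hz] using hj)
    have hzcard : z.card = 1 := le_antisymm
      (le_trans (Finset.card_le_card hzsub) (by simp)) hzpos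
    rw [hcardsub]
    omega

/-- If `P`, `Q` are continuous skew-symmetric `(2n+1)×(2n+1)` complex matrix
fields on a topological space `X` and the pair `(P(x₀), Q(x₀))` is generic at a point `x₀`
(i.e. `rank(μP(x₀) + νQ(x₀)) = 2n` for all `(μ,ν) ≠ (0,0)`), then the pair is generic on a
whole open neighborhood of `x₀`. -/
theorem stmt_7 (X : Type*) [TopologicalSpace X] (n : ℕ)
    (P Q : X → Matrix (Fin (2 * n + 1)) (Fin (2 * n + 1)) ℂ)
    (hP : Continuous P) (hQ : Continuous Q)
    (hPskew : ∀ x : X, (P x)ᵀ = -(P x)) (hQskew : ∀ x : X, (Q x)ᵀ = -(Q x))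
    (x₀ : X)
    (hgen : ∀ μ ν : ℂ, (μ, ν) ≠ (0, 0) → (μ • P x₀ + ν • Q x₀).rank = 2 * n) :
    ∃ U : Set X, IsOpen U ∧ x₀ ∈ U ∧
      ∀ x ∈ U, ∀ μ ν : ℂ, (μ, ν) ≠ (0, 0) → (μ • P x + ν • Q x).rank = 2 * n := by
  classical
  -- every pencil matrix is skew-symmetric, hence singular (odd dimension)
  have hdet : ∀ (x : X) (μ ν : ℂ), (μ • P x + ν • Q x).det = 0 := by
    intro x μ ν
    have hskew : (μ • P x + ν • Q x)ᵀ = -(μ • P x + ν • Q x) := by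
      rw [transpose_add, transpose_smul, transpose_smul, hPskew, hQskew,
        smul_neg, smul_neg, ← neg_add]
    have h1 : (μ • P x + ν • Q x).det = -(μ • P x + ν • Q x).det := by
      conv_lhs => rw [← Matrix.det_transpose, hskew]
      rw [Matrix.det_neg, Fintype.card_fin]
      rw [Odd.neg_one_pow ⟨n, by ring⟩, neg_one_mul]
    have h2 : (μ • P x + ν • Q x).det + (μ • P x + ν • Q x).det = 0 :=
      eq_neg_iff_add_eq_zero.mp h1
    have h3 : (2 : ℂ) * (μ • P x + ν • Q x).det = 0 := by rw [two_mul]; exact h2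
    exact (mul_eq_zero.mp h3).resolve_left two_ne_zero
  have key : ∀ M : Matrix (Fin (2 * n + 1)) (Fin (2 * n + 1)) ℂ, M.det = 0 →
      (M.rank = 2 * n ↔ adjugate M ≠ 0) := fun M h =>
    aux_rank_eq_iff_adjugate_ne_zero (2 * n) M h
  -- the adjugate of the pencil, as a continuous function on X × (ℂ × ℂ)
  set F : X × (ℂ × ℂ) → Matrix (Fin (2 * n + 1)) (Fin (2 * n + 1)) ℂ :=
    fun z => adjugate (z.2.1 • P z.1 + z.2.2 • Q z.1) with hF
  have hFc : Continuous F :=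
    Continuous.matrix_adjugate
      (((continuous_snd.fst).smul (hP.comp continuous_fst)).add
        ((continuous_snd.snd).smul (hQ.comp continuous_fst)))
  have hK : IsCompact (Metric.sphere (0 : ℂ × ℂ) 1) := isCompact_sphere _ _
  have hev : ∀ᶠ x in nhds x₀, ∀ p ∈ Metric.sphere (0 : ℂ × ℂ) 1, F (x, p) ≠ 0 := by
    apply hK.eventually_forall_of_forall_eventually
    intro p hp
    have hp0 : p ≠ 0 := by
      intro h
      rw [h, mem_sphere_zero_iff_norm, norm_zero] at hp
      exact one_ne_zero hp.symm
    have hpne : (p.1, p.2) ≠ ((0 : ℂ), (0 : ℂ)) := by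
      simpa [Prod.ext_iff] using hp0
    have hne : F (x₀, p) ≠ 0 :=
      (key _ (hdet x₀ p.1 p.2)).mp (hgen p.1 p.2 hpne)
    exact hFc.continuousAt.eventually_ne hne
  obtain ⟨U, hU1, hU2, hU3⟩ := eventually_nhds_iff.mp hev
  refine ⟨U, hU2, hU3, ?_⟩
  intro x hx μ ν hμν
  -- normalize (μ, ν) to the unit sphere
  set r : ℝ := ‖((μ, ν) : ℂ × ℂ)‖ with hr
  have hμν0 : ((μ, ν) : ℂ × ℂ) ≠ 0 := by
    simpa [Prod.ext_iff] using hμν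
  have hrne : r ≠ 0 := norm_ne_zero_iff.mpr hμν0
  set c : ℂ := ((r : ℂ))⁻¹ with hc
  have hcne : c ≠ 0 := inv_ne_zero (by exact_mod_cast hrne)
  have hmem : (c • ((μ, ν) : ℂ × ℂ)) ∈ Metric.sphere (0 : ℂ × ℂ) 1 := by
    rw [mem_sphere_zero_iff_norm, norm_smul, hc, norm_inv, Complex.norm_real,
      Real.norm_of_nonneg (norm_nonneg _)]
    exact inv_mul_cancel₀ hrne
  have h1 : F (x, c • ((μ, ν) : ℂ × ℂ)) ≠ 0 := hU1 x hx _ hmem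
  have h2 : F (x, c • ((μ, ν) : ℂ × ℂ)) = adjugate ((c * μ) • P x + (c * ν) • Q x) := rfl
  have hrank' : ((c * μ) • P x + (c * ν) • Q x).rank = 2 * n := by
    apply (key _ (hdet x (c * μ) (c * ν))).mpr
    rw [← h2]; exact h1
  have heq : (c * μ) • P x + (c * ν) • Q x = c • (μ • P x + ν • Q x) := by
    rw [smul_add, smul_smul, smul_smul]
  rw [heq] at hrank'
  have hu : IsUnit (diagonal (fun _ : Fin (2 * n + 1) => c)).det := by
    apply isUnit_iff_ne_zero.mpr
    rw [Matrix.det_diagonal, Finset.prod_const]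
    exact pow_ne_zero _ hcne
  have hscale : (c • (μ • P x + ν • Q x)).rank = (μ • P x + ν • Q x).rank := by
    rw [smul_eq_diagonal_mul, Matrix.rank_mul_eq_right_of_isUnit_det _ _ hu]
  rw [← hscale]
  exact hrank'
end

section
/- Let U ⊆ ℝ^{2n} be an open connected set and let P : U → Matrix (Fin (2n)) (Fin (2n)) ℝ be a smooth matrix-valued map such that P(x) is skew-symmetric and invertible for every x ∈ U. Suppose f, g : U → ℝ are smooth positive functions such that for every index i, Σⱼ ( Pᵢⱼ ∂ⱼ f + f ∂ⱼ Pᵢⱼ ) = 0 on U and Σⱼ ( Pᵢⱼ ∂ⱼ g + g ∂ⱼ Pᵢⱼ ) = 0 on U. Then there exists a constant c > 0 such that f = c · g on U. -/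
open Matrix

lemma clm_eq_zero_of_single' {m : ℕ} (L : (Fin m → ℝ) →L[ℝ] ℝ)
    (h : ∀ j, L (Pi.single j 1) = 0) : L = 0 := by
  ext v
  have hv : v = ∑ j, v j • (Pi.single j 1 : Fin m → ℝ) := by
    funext k
    simp [Pi.single_apply, Finset.sum_ite_eq']
  rw [hv, map_sum]
  simp [h]

/-- On an open connected set `U ⊆ ℝ^{2n}`, two smooth positive densities `f`, `g`
invariant with respect to the same smooth skew-symmetric invertible (i.e. nondegenerate
Poisson) matrix field `P` differ by a positive constant factor. -/
theorem stmt_9 (n : ℕ) (U : Set (Fin (2 * n) → ℝ)) (hU : IsOpen U)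
    (hUconn : IsConnected U)
    (P : (Fin (2 * n) → ℝ) → Matrix (Fin (2 * n)) (Fin (2 * n)) ℝ)
    (hPsmooth : ∀ i j : Fin (2 * n), ContDiffOn ℝ (⊤ : ℕ∞) (fun x => P x i j) U)
    (hPskew : ∀ x ∈ U, (P x)ᵀ = -(P x))
    (hPinv : ∀ x ∈ U, IsUnit (P x))
    (f g : (Fin (2 * n) → ℝ) → ℝ)
    (hf : ContDiffOn ℝ (⊤ : ℕ∞) f U) (hg : ContDiffOn ℝ (⊤ : ℕ∞) g U)
    (hfpos : ∀ x ∈ U, 0 < f x) (hgpos : ∀ x ∈ U, 0 < g x)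
    (hfeq : ∀ i : Fin (2 * n), ∀ x ∈ U,
      ∑ j : Fin (2 * n), (P x i j * fderiv ℝ f x (Pi.single j 1)
        + f x * fderiv ℝ (fun y => P y i j) x (Pi.single j 1)) = 0)
    (hgeq : ∀ i : Fin (2 * n), ∀ x ∈ U,
      ∑ j : Fin (2 * n), (P x i j * fderiv ℝ g x (Pi.single j 1)
        + g x * fderiv ℝ (fun y => P y i j) x (Pi.single j 1)) = 0) :
    ∃ c : ℝ, 0 < c ∧ ∀ x ∈ U, f x = c * g x := by
  obtain ⟨x0, hx0⟩ := hUconn.nonempty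
  set h : (Fin (2 * n) → ℝ) → ℝ := fun y => f y / g y with hh
  have key : ∀ x ∈ U, HasFDerivAt h (0 : (Fin (2 * n) → ℝ) →L[ℝ] ℝ) x := by
    intro x hx
    have hgx : g x ≠ 0 := (hgpos x hx).ne'
    have hfd : DifferentiableAt ℝ f x :=
      (hf.contDiffAt (hU.mem_nhds hx)).differentiableAt (by simp)
    have hgd : DifferentiableAt ℝ g x :=
      (hg.contDiffAt (hU.mem_nhds hx)).differentiableAt (by simp)
    set v : Fin (2 * n) → ℝ := fun j =>
      g x * fderiv ℝ f x (Pi.single j 1) - f x * fderiv ℝ g x (Pi.single j 1) with hvdef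
    have hPv : ∀ i, ∑ j, P x i j * v j = 0 := by
      intro i
      have h1 := hfeq i x hx
      have h2 := hgeq i x hx
      have heq : ∑ j, P x i j * v j =
          g x * (∑ j : Fin (2 * n), (P x i j * fderiv ℝ f x (Pi.single j 1)
            + f x * fderiv ℝ (fun y => P y i j) x (Pi.single j 1)))
          - f x * (∑ j : Fin (2 * n), (P x i j * fderiv ℝ g x (Pi.single j 1)
            + g x * fderiv ℝ (fun y => P y i j) x (Pi.single j 1))) := by
        rw [Finset.mul_sum, Finset.mul_sum, ← Finset.sum_sub_distrib]
        refine Finset.sum_congr rfl fun j _ => ?_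
        simp only [hvdef]
        ring
      rw [heq, h1, h2]; ring
    have hdet : IsUnit (P x).det := (Matrix.isUnit_iff_isUnit_det _).1 (hPinv x hx)
    have hmv : (P x) *ᵥ v = 0 := by
      funext i
      simpa [Matrix.mulVec, dotProduct] using hPv i
    have hv0 : v = 0 := by
      have h3 := congrArg (fun w => (P x)⁻¹ *ᵥ w) hmv
      simpa [Matrix.mulVec_mulVec, Matrix.nonsing_inv_mul _ hdet] using h3
    have Hinv : HasFDerivAt (fun y => (g y)⁻¹)
        (((ContinuousLinearMap.smulRight (1 : ℝ →L[ℝ] ℝ) (-(g x ^ 2)⁻¹))).comp (fderiv ℝ g x)) x :=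
      (hasFDerivAt_inv hgx).comp x hgd.hasFDerivAt
    have Hmul := hfd.hasFDerivAt.mul Hinv
    have hL : HasFDerivAt h
        (f x • (((ContinuousLinearMap.smulRight (1 : ℝ →L[ℝ] ℝ) (-(g x ^ 2)⁻¹))).comp (fderiv ℝ g x))
          + (g x)⁻¹ • fderiv ℝ f x) x := by
      simp only [hh, div_eq_mul_inv]; exact Hmul
    have hzero : (f x • (((ContinuousLinearMap.smulRight (1 : ℝ →L[ℝ] ℝ) (-(g x ^ 2)⁻¹))).comp (fderiv ℝ g x))
          + (g x)⁻¹ • fderiv ℝ f x) = 0 := by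
      apply clm_eq_zero_of_single'
      intro j
      have hj : g x * fderiv ℝ f x (Pi.single j 1) - f x * fderiv ℝ g x (Pi.single j 1) = 0 :=
        congrFun hv0 j
      simp only [ContinuousLinearMap.add_apply, ContinuousLinearMap.smul_apply,
        ContinuousLinearMap.comp_apply, ContinuousLinearMap.smulRight_apply,
        ContinuousLinearMap.one_apply, smul_eq_mul, ContinuousLinearMap.zero_apply]
      field_simp
      linear_combination hj
    rwa [hzero] at hL
  -- locally constant
  have hloc : ∀ x ∈ U, ∃ r > 0, Metric.ball x r ⊆ U ∧ ∀ y ∈ Metric.ball x r, h y = h x := by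
    intro x hx
    obtain ⟨r, hr, hball⟩ := Metric.isOpen_iff.1 hU x hx
    refine ⟨r, hr, hball, fun y hy => ?_⟩
    exact (convex_ball x r).is_const_of_fderivWithin_eq_zero
      (fun z hz => ((key z (hball hz)).differentiableAt).differentiableWithinAt)
      (fun z hz => by rw [fderivWithin_of_isOpen Metric.isOpen_ball hz, (key z (hball hz)).fderiv])
      hy (Metric.mem_ball_self hr)
  set c := h x0 with hc
  set S : Set (Fin (2 * n) → ℝ) := {x | x ∈ U ∧ h x = c} with hS
  set T : Set (Fin (2 * n) → ℝ) := {x | x ∈ U ∧ h x ≠ c} with hT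
  have hSopen : IsOpen S := by
    rw [Metric.isOpen_iff]
    rintro x ⟨hxU, hxc⟩
    obtain ⟨r, hr, hbU, hconst⟩ := hloc x hxU
    exact ⟨r, hr, fun y hy => ⟨hbU hy, by rw [hconst y hy, hxc]⟩⟩
  have hTopen : IsOpen T := by
    rw [Metric.isOpen_iff]
    rintro x ⟨hxU, hxc⟩
    obtain ⟨r, hr, hbU, hconst⟩ := hloc x hxU
    exact ⟨r, hr, fun y hy => ⟨hbU hy, by rw [hconst y hy]; exact hxc⟩⟩
  have hdisj : Disjoint S T := by
    rw [Set.disjoint_iff]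
    rintro x ⟨⟨_, h1⟩, ⟨_, h2⟩⟩
    exact h2 h1
  have hsub : U ⊆ S ∪ T := fun x hx => by
    by_cases hxc : h x = c
    · exact Or.inl ⟨hx, hxc⟩
    · exact Or.inr ⟨hx, hxc⟩
  have hUS : U ⊆ S :=
    hUconn.isPreconnected.subset_left_of_subset_union hSopen hTopen hdisj hsub
      ⟨x0, hx0, hx0, rfl⟩
  refine ⟨c, ?_, fun x hx => ?_⟩
  · exact div_pos (hfpos x0 hx0) (hgpos x0 hx0)
  · have hxc : h x = c := (hUS hx).2
    have hgx : g x ≠ 0 := (hgpos x hx).ne'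
    rw [show h x = f x / g x from rfl, div_eq_iff hgx] at hxc
    rw [← hxc]  -- hxc : f x = c * g x maybe
end

section
/- Let n ≥ 5 and consider on the open positive orthant U = {x ∈ ℝⁿ : xᵢ > 0 for all i} the Volterra matrix field P defined, with indices understood cyclically modulo n, by P_{i,i+1} = xᵢ x_{i+1}, P_{i+1,i} = −xᵢ x_{i+1}, and all other entries zero (i.e. Pᵢⱼ = (δ_{i+1,j} − δ_{i,j+1}) xᵢ xⱼ). Then the function f(x) = (x₁ x₂ ⋯ xₙ)^{−3/2} satisfies, for every index i, Σⱼ ( Pᵢⱼ(x) ∂ⱼ f(x) + f(x) ∂ⱼ Pᵢⱼ(x) ) = 0 for all x ∈ U. -/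
/-!
Write `Pᵢⱼ = sᵢⱼ xᵢ xⱼ` and `f = (∏ₖ xₖ) ^ a`. Since `f` is a power of a product, `xⱼ ∂ⱼ f = a f`,
and `∂ⱼ Pᵢⱼ = sᵢⱼ xᵢ` as soon as `sᵢᵢ = 0`; hence `Σⱼ (Pᵢⱼ ∂ⱼ f + f ∂ⱼ Pᵢⱼ) = (a + 1) f xᵢ Σⱼ sᵢⱼ`.
The Volterra coefficients `sᵢⱼ = δ_{i+1,j} − δ_{i,j+1}` have zero row sums, so the expression
vanishes for every exponent `a`, in particular for `a = −3/2`.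
-/

open Finset

section QuadraticField

variable {ι : Type*} [Fintype ι] [DecidableEq ι]

theorem mul_fderiv_prod_rpow_single (a : ℝ) {x : ι → ℝ} (hx : ∏ k, x k ≠ 0) (j : ι) :
    x j * fderiv ℝ (fun y : ι → ℝ => (∏ k, y k) ^ a) x (Pi.single j 1)
      = a * (∏ k, x k) ^ a := by
  rw [((hasFDerivAt_finsetProd (u := univ) (x := x)).rpow_const (Or.inl hx)).fderiv]
  simp only [smul_apply, _root_.sum_apply, ContinuousLinearMap.proj_apply, Pi.single_apply,
    smul_eq_mul, mul_ite, mul_one, mul_zero, sum_ite_eq', mem_univ, if_true]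
  calc x j * (a * (∏ k, x k) ^ (a - 1) * ∏ k ∈ univ.erase j, x k)
      = a * ((∏ k, x k) ^ (a - 1) * (x j * ∏ k ∈ univ.erase j, x k)) := by ring
    _ = a * (∏ k, x k) ^ a := by
      rw [mul_prod_erase univ x (mem_univ j), ← Real.rpow_add_one hx, sub_add_cancel]

theorem fderiv_const_mul_mul_apply_single (c : ℝ) (i j : ι) (x : ι → ℝ) :
    fderiv ℝ (fun y : ι → ℝ => c * (y i * y j)) x (Pi.single j 1)
      = c * (x i + if i = j then x j else 0) := by
  have hderiv : HasFDerivAt (fun y : ι → ℝ => y i * y j)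
      (x i • (ContinuousLinearMap.proj j : (ι → ℝ) →L[ℝ] ℝ)
        + x j • (ContinuousLinearMap.proj i : (ι → ℝ) →L[ℝ] ℝ)) x :=
    (hasFDerivAt_apply i x).mul (hasFDerivAt_apply j x)
  rw [(hderiv.const_mul c).fderiv]
  by_cases hij : i = j <;> simp [hij, mul_add]

theorem sum_quadratic_mul_fderiv_prod_rpow (s : Matrix ι ι ℝ) (a : ℝ) {x : ι → ℝ}
    (hx : ∏ k, x k ≠ 0) (i : ι) (hs : s i i = 0) :
    ∑ j, (s i j * (x i * x j) * fderiv ℝ (fun y : ι → ℝ => (∏ k, y k) ^ a) x (Pi.single j 1)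
        + (∏ k, x k) ^ a * fderiv ℝ (fun y : ι → ℝ => s i j * (y i * y j)) x (Pi.single j 1))
      = (a + 1) * (∏ k, x k) ^ a * x i * ∑ j, s i j := by
  rw [mul_sum]
  refine sum_congr rfl fun j _ => ?_
  have hdiag : s i j * (if i = j then x j else 0) = 0 := by
    split_ifs with hij
    · rw [← hij, hs, zero_mul]
    · rw [mul_zero]
  rw [fderiv_const_mul_mul_apply_single, mul_add (s i j), hdiag]
  linear_combination (s i j * x i) * mul_fderiv_prod_rpow_single a hx j

end QuadraticField

section Volterra

variable (n : ℕ) [NeZero n]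

def volterraCoeff : Matrix (Fin n) (Fin n) ℝ :=
  Matrix.of fun i j => (if i + 1 = j then 1 else 0) - (if i = j + 1 then 1 else 0)

variable {n}

theorem volterraCoeff_apply (i j : Fin n) :
    volterraCoeff n i j = (if i + 1 = j then 1 else 0) - (if i = j + 1 then 1 else 0) :=
  rfl

theorem volterraCoeff_self (i : Fin n) : volterraCoeff n i i = 0 := by
  simp only [volterraCoeff_apply, eq_comm (a := i + 1), sub_self]

theorem sum_volterraCoeff (i : Fin n) : ∑ j, volterraCoeff n i j = 0 := by
  simp only [volterraCoeff_apply, sum_sub_distrib, sum_ite_eq, mem_univ, if_true]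
  have hshift : ∑ j : Fin n, (if i = j + 1 then (1 : ℝ) else 0) = ∑ j, if i = j then 1 else 0 :=
    Equiv.sum_comp (Equiv.addRight 1) fun j => if i = j then (1 : ℝ) else 0
  simp [hshift]

end Volterra

theorem stmt_10_general (n : ℕ) [NeZero n]
    (P : (Fin n → ℝ) → Matrix (Fin n) (Fin n) ℝ)
    (hP : ∀ (x : Fin n → ℝ) (i j : Fin n),
      P x i j = ((if i + 1 = j then (1 : ℝ) else 0) - (if i = j + 1 then 1 else 0))
        * (x i * x j))
    (f : (Fin n → ℝ) → ℝ)
    (hf : ∀ x : Fin n → ℝ, f x = (∏ i : Fin n, x i) ^ (-(3 : ℝ) / 2)) :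
    ∀ i : Fin n, ∀ x : Fin n → ℝ, (∀ k : Fin n, 0 < x k) →
      ∑ j : Fin n, (P x i j * fderiv ℝ f x (Pi.single j 1)
        + f x * fderiv ℝ (fun y => P y i j) x (Pi.single j 1)) = 0 := by
  intro i x hx
  obtain rfl : f = fun y => (∏ k, y k) ^ (-(3 : ℝ) / 2) := funext hf
  simp only [hP, ← volterraCoeff_apply]
  rw [sum_quadratic_mul_fderiv_prod_rpow _ _ (prod_pos fun k _ => hx k).ne' i
    (volterraCoeff_self i), sum_volterraCoeff, mul_zero]

/-- The first Poisson structure of the periodic Volterra lattice,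
`Pᵢⱼ = (δ_{i+1,j} − δ_{i,j+1}) xᵢ xⱼ` (indices cyclic mod `n`, `n ≥ 5`), leaves the volume
density `f(x) = (x₁ ⋯ xₙ)^{-3/2}` invariant on the positive orthant: for every `i`,
`Σⱼ (Pᵢⱼ ∂ⱼf + f ∂ⱼPᵢⱼ) = 0` there. -/
theorem stmt_10 (n : ℕ) [NeZero n] (hn : 5 ≤ n)
    (P : (Fin n → ℝ) → Matrix (Fin n) (Fin n) ℝ)
    (hP : ∀ (x : Fin n → ℝ) (i j : Fin n),
      P x i j = ((if i + 1 = j then (1 : ℝ) else 0) - (if i = j + 1 then 1 else 0))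
        * (x i * x j))
    (f : (Fin n → ℝ) → ℝ)
    (hf : ∀ x : Fin n → ℝ, f x = (∏ i : Fin n, x i) ^ (-(3 : ℝ) / 2)) :
    ∀ i : Fin n, ∀ x : Fin n → ℝ, (∀ k : Fin n, 0 < x k) →
      ∑ j : Fin n, (P x i j * fderiv ℝ f x (Pi.single j 1)
        + f x * fderiv ℝ (fun y => P y i j) x (Pi.single j 1)) = 0 :=
  stmt_10_general n P hP f hf
end

section
/- Let n ≥ 5 and consider on the open positive orthant U = {x ∈ ℝⁿ : xᵢ > 0 for all i} the matrix field Q defined, with indices understood cyclically modulo n, by Qᵢⱼ = (δ_{i+1,j} − δ_{i,j+1}) xᵢ xⱼ (xᵢ + xⱼ) + δ_{i+2,j} xᵢ x_{i+1} x_{i+2} − δ_{i−2,j} xᵢ x_{i−1} x_{i−2}. Then Q(x) is skew-symmetric for every x ∈ U, and the function f(x) = (x₁ x₂ ⋯ xₙ)^{−3/2} satisfies, for every index i, Σⱼ ( Qᵢⱼ(x) ∂ⱼ f(x) + f(x) ∂ⱼ Qᵢⱼ(x) ) = 0 for all x ∈ U. -/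
/-!
Write `Q = B - Bᵀ`, where `B` is supported on the first two cyclic superdiagonals; this gives
skew-symmetry. For the invariance, row `i` of `Q` is supported on the columns `i ± 1, i ± 2`, which
are pairwise distinct as `n ≥ 5`. Since `∂ⱼ f = -(3/2) f / xⱼ`, the identity becomes
`f · Σⱼ (∂ⱼ Qᵢⱼ - (3/2) Qᵢⱼ / xⱼ) = 0`, and the four columns contribute
`(xᵢ x_{i+1} - xᵢ²)/2`, `(xᵢ² - xᵢ x_{i-1})/2`, `-xᵢ x_{i+1}/2` and `xᵢ x_{i-1}/2`.
-/

open Matrix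

namespace Volterra

section Partials

variable {ι : Type*} [Fintype ι] [DecidableEq ι]

theorem fderiv_prod_rpow_apply_single {x : ι → ℝ} (hx : ∀ k, 0 < x k) (p : ℝ) (j : ι) :
    fderiv ℝ (fun y : ι → ℝ => (∏ k, y k) ^ p) x (Pi.single j 1) =
      p * (∏ k, x k) ^ p / x j := by
  have hP : 0 < ∏ k, x k := Finset.prod_pos fun k _ => hx k
  have hprod_erase : ∏ k ∈ Finset.univ.erase j, x k = (∏ k, x k) / x j := by
    rw [eq_div_iff (hx j).ne', Finset.prod_erase_mul _ _ (Finset.mem_univ j)]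
  rw [((hasFDerivAt_finsetProd (𝕜 := ℝ) (u := Finset.univ) (x := x)).rpow_const
    (p := p) (Or.inl hP.ne')).fderiv]
  simp only [_root_.smul_apply, _root_.sum_apply, ContinuousLinearMap.proj_apply,
    Pi.single_apply, smul_eq_mul, mul_ite, mul_one, mul_zero, Finset.sum_ite_eq', Finset.mem_univ,
    if_true, hprod_erase, Real.rpow_sub_one hP.ne']
  field_simp

theorem fderiv_mul_mul_apply_single_right (x : ι → ℝ) {a b c : ι} (hac : a ≠ c) (hbc : b ≠ c) :
    fderiv ℝ (fun y : ι → ℝ => y a * y b * y c) x (Pi.single c 1) = x a * x b := by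
  rw [HasFDerivAt.fderiv (f := fun y : ι → ℝ => y a * y b * y c)
    (((hasFDerivAt_apply a x).mul (hasFDerivAt_apply b x)).mul (hasFDerivAt_apply c x))]
  simp [hac, hbc]

theorem fderiv_mul_mul_add_apply_single_right (x : ι → ℝ) {a b : ι} (hab : a ≠ b) :
    fderiv ℝ (fun y : ι → ℝ => y a * y b * (y a + y b)) x (Pi.single b 1) =
      x a * (x a + x b) + x a * x b := by
  rw [HasFDerivAt.fderiv (f := fun y : ι → ℝ => y a * y b * (y a + y b))
    (((hasFDerivAt_apply a x).mul (hasFDerivAt_apply b x)).mul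
      ((hasFDerivAt_apply a x).add (hasFDerivAt_apply b x)))]
  simp [hab]
  ring

end Partials

variable {n : ℕ} [NeZero n]

def secondStructure (x : Fin n → ℝ) : Matrix (Fin n) (Fin n) ℝ := of fun i j =>
  ((if i + 1 = j then (1 : ℝ) else 0) - (if i = j + 1 then 1 else 0)) * (x i * x j * (x i + x j))
    + (if i + 2 = j then 1 else 0) * (x i * x (i + 1) * x (i + 2))
    - (if i - 2 = j then 1 else 0) * (x i * x (i - 1) * x (i - 2))

def upperPart (x : Fin n → ℝ) : Matrix (Fin n) (Fin n) ℝ := of fun i j =>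
  (if i + 1 = j then (1 : ℝ) else 0) * (x i * x j * (x i + x j))
    + (if i + 2 = j then 1 else 0) * (x i * x (i + 1) * x (i + 2))

open Fin.CommRing in
theorem secondStructure_eq_sub_transpose (x : Fin n → ℝ) :
    secondStructure x = upperPart x - (upperPart x)ᵀ := by
  ext i j
  have h_sub_one : (if i = j + 1 then (1 : ℝ) else 0) * (x i * x j * (x i + x j)) =
      (if j + 1 = i then 1 else 0) * (x j * x i * (x j + x i)) := by
    simp only [eq_comm (a := i)]
    ring
  have h_sub_two : (if i - 2 = j then (1 : ℝ) else 0) * (x i * x (i - 1) * x (i - 2)) =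
      (if j + 2 = i then 1 else 0) * (x j * x (j + 1) * x (j + 2)) := by
    by_cases h : j + 2 = i
    · subst h
      rw [if_pos (add_sub_cancel_right j 2), if_pos rfl, add_sub_cancel_right,
        show j + 2 - 1 = j + 1 by ring]
      ring
    · rw [if_neg (fun h' => h (sub_eq_iff_eq_add.mp h').symm), if_neg h, zero_mul, zero_mul]
  simp only [secondStructure, upperPart, of_apply, Matrix.sub_apply, transpose_apply]
  rw [sub_mul, h_sub_one, h_sub_two]
  ring

theorem secondStructure_transpose (x : Fin n → ℝ) :
    (secondStructure x)ᵀ = -secondStructure x := by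
  rw [secondStructure_eq_sub_transpose, transpose_sub, transpose_transpose, neg_sub]

open Fin.CommRing in
theorem one_two_three_four_ne_zero (hn : 5 ≤ n) :
    (1 : Fin n) ≠ 0 ∧ (2 : Fin n) ≠ 0 ∧ (3 : Fin n) ≠ 0 ∧ (4 : Fin n) ≠ 0 := by
  have natCast_ne_zero (k : ℕ) (hk : 0 < k) (hkn : k < n) : (k : Fin n) ≠ 0 := by
    rw [Ne, Fin.natCast_eq_zero]
    exact Nat.not_dvd_of_pos_of_lt hk hkn
  exact ⟨by exact_mod_cast natCast_ne_zero 1 (by norm_num) (by omega),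
    by exact_mod_cast natCast_ne_zero 2 (by norm_num) (by omega),
    by exact_mod_cast natCast_ne_zero 3 (by norm_num) (by omega),
    by exact_mod_cast natCast_ne_zero 4 (by norm_num) (by omega)⟩

open Fin.CommRing in
theorem sum_eq_neighbors_of_eq_zero {M : Type*} [AddCommMonoid M] (hn : 5 ≤ n) (i : Fin n)
    (g : Fin n → M) (hg : ∀ j, j ≠ i - 2 → j ≠ i - 1 → j ≠ i + 1 → j ≠ i + 2 → g j = 0) :
    ∑ j, g j = g (i - 2) + g (i - 1) + g (i + 1) + g (i + 2) := by
  obtain ⟨h1, h2, h3, h4⟩ := one_two_three_four_ne_zero hn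
  rw [← Finset.sum_subset (Finset.subset_univ {i - 2, i - 1, i + 1, i + 2}) fun j _ hj => by
    simp only [Finset.mem_insert, Finset.mem_singleton, not_or] at hj
    exact hg j hj.1 hj.2.1 hj.2.2.1 hj.2.2.2]
  rw [Finset.sum_insert, Finset.sum_insert, Finset.sum_insert, Finset.sum_singleton]
  · abel
  all_goals simp only [Finset.mem_insert, Finset.mem_singleton, not_or]
  · exact fun h => h1 (by linear_combination -h)
  · exact ⟨fun h => h2 (by linear_combination -h), fun h => h3 (by linear_combination -h)⟩
  · exact ⟨fun h => h1 (by linear_combination -h), fun h => h3 (by linear_combination -h),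
      fun h => h4 (by linear_combination -h)⟩

section Rows

open Fin.CommRing

theorem secondStructure_apply_eq_zero (y : Fin n → ℝ) {i j : Fin n} (hj₁ : j ≠ i - 2)
    (hj₂ : j ≠ i - 1) (hj₃ : j ≠ i + 1) (hj₄ : j ≠ i + 2) : secondStructure y i j = 0 := by
  have hj₂' : i ≠ j + 1 := fun h => hj₂ (eq_sub_of_add_eq h.symm)
  simp [secondStructure, hj₁.symm, hj₂', hj₃.symm, hj₄.symm]

theorem secondStructure_apply_add_one (hn : 5 ≤ n) (y : Fin n → ℝ) (i : Fin n) :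
    secondStructure y i (i + 1) = y i * y (i + 1) * (y i + y (i + 1)) := by
  obtain ⟨h1, h2, h3, -⟩ := one_two_three_four_ne_zero hn
  rw [secondStructure, of_apply, if_pos rfl, if_neg (fun h => h2 (by linear_combination -h)),
    if_neg (fun h => h1 (by linear_combination h)), if_neg (fun h => h3 (by linear_combination -h))]
  ring

theorem secondStructure_apply_sub_one (hn : 5 ≤ n) (y : Fin n → ℝ) (i : Fin n) :
    secondStructure y i (i - 1) = -(y i * y (i - 1) * (y i + y (i - 1))) := by
  obtain ⟨h1, h2, h3, -⟩ := one_two_three_four_ne_zero hn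
  rw [secondStructure, of_apply, if_neg (fun h => h2 (by linear_combination h)),
    if_pos (sub_add_cancel i 1).symm, if_neg (fun h => h3 (by linear_combination h)),
    if_neg (fun h => h1 (by linear_combination -h))]
  ring

theorem secondStructure_apply_add_two (hn : 5 ≤ n) (y : Fin n → ℝ) (i : Fin n) :
    secondStructure y i (i + 2) = y i * y (i + 1) * y (i + 2) := by
  obtain ⟨h1, -, h3, h4⟩ := one_two_three_four_ne_zero hn
  rw [secondStructure, of_apply, if_neg (fun h => h1 (by linear_combination -h)),
    if_neg (fun h => h3 (by linear_combination -h)), if_pos rfl,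
    if_neg (fun h => h4 (by linear_combination -h))]
  ring

theorem secondStructure_apply_sub_two (hn : 5 ≤ n) (y : Fin n → ℝ) (i : Fin n) :
    secondStructure y i (i - 2) = -(y i * y (i - 1) * y (i - 2)) := by
  obtain ⟨h1, -, h3, h4⟩ := one_two_three_four_ne_zero hn
  rw [secondStructure, of_apply, if_neg (fun h => h3 (by linear_combination h)),
    if_neg (fun h => h1 (by linear_combination h)), if_neg (fun h => h4 (by linear_combination h)),
    if_pos rfl]
  ring

theorem sum_secondStructure_mul_fderiv_add_eq_zero (hn : 5 ≤ n) (i : Fin n) {x : Fin n → ℝ}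
    (hx : ∀ k, 0 < x k) :
    ∑ j, (secondStructure x i j
          * fderiv ℝ (fun y : Fin n → ℝ => (∏ k, y k) ^ (-(3 : ℝ) / 2)) x (Pi.single j 1)
        + (∏ k, x k) ^ (-(3 : ℝ) / 2)
          * fderiv ℝ (fun y => secondStructure y i j) x (Pi.single j 1)) = 0 := by
  obtain ⟨h1, h2, -, -⟩ := one_two_three_four_ne_zero hn
  have hi_add_one : i ≠ i + 1 := fun h => h1 (by linear_combination -h)
  have hi_sub_one : i ≠ i - 1 := fun h => h1 (by linear_combination h)
  have hi_add_two : i ≠ i + 2 := fun h => h2 (by linear_combination -h)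
  have hi_sub_two : i ≠ i - 2 := fun h => h2 (by linear_combination h)
  have h_add_one_add_two : i + 1 ≠ i + 2 := fun h => h1 (by linear_combination -h)
  have h_sub_one_sub_two : i - 1 ≠ i - 2 := fun h => h1 (by linear_combination h)
  rw [sum_eq_neighbors_of_eq_zero hn i _ fun j hj₁ hj₂ hj₃ hj₄ => by
    simp [secondStructure_apply_eq_zero _ hj₁ hj₂ hj₃ hj₄]]
  simp only [secondStructure_apply_add_one hn, secondStructure_apply_sub_one hn,
    secondStructure_apply_add_two hn, secondStructure_apply_sub_two hn, fderiv_fun_neg,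
    _root_.neg_apply, fderiv_prod_rpow_apply_single hx,
    fderiv_mul_mul_add_apply_single_right x hi_add_one,
    fderiv_mul_mul_add_apply_single_right x hi_sub_one,
    fderiv_mul_mul_apply_single_right x hi_add_two h_add_one_add_two,
    fderiv_mul_mul_apply_single_right x hi_sub_two h_sub_one_sub_two]
  have := hx (i - 2); have := hx (i - 1); have := hx (i + 1); have := hx (i + 2)
  field_simp
  ring

end Rows

end Volterra

/-- The second Poisson structure of the periodic Volterra lattice,
`Qᵢⱼ = (δ_{i+1,j} − δ_{i,j+1}) xᵢxⱼ(xᵢ+xⱼ) + δ_{i+2,j} xᵢx_{i+1}x_{i+2} − δ_{i−2,j} xᵢx_{i−1}x_{i−2}`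
(indices cyclic mod `n`, `n ≥ 5`), is skew-symmetric on the positive orthant and leaves the
volume density `f(x) = (x₁ ⋯ xₙ)^{-3/2}` invariant there: for every `i`,
`Σⱼ (Qᵢⱼ ∂ⱼf + f ∂ⱼQᵢⱼ) = 0`. -/
theorem stmt_11 (n : ℕ) [NeZero n] (hn : 5 ≤ n)
    (Q : (Fin n → ℝ) → Matrix (Fin n) (Fin n) ℝ)
    (hQ : ∀ (x : Fin n → ℝ) (i j : Fin n),
      Q x i j = ((if i + 1 = j then (1 : ℝ) else 0) - (if i = j + 1 then 1 else 0))
          * (x i * x j * (x i + x j))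
        + (if i + 2 = j then 1 else 0) * (x i * x (i + 1) * x (i + 2))
        - (if i - 2 = j then 1 else 0) * (x i * x (i - 1) * x (i - 2)))
    (f : (Fin n → ℝ) → ℝ)
    (hf : ∀ x : Fin n → ℝ, f x = (∏ i : Fin n, x i) ^ (-(3 : ℝ) / 2)) :
    (∀ x : Fin n → ℝ, (∀ k : Fin n, 0 < x k) → (Q x)ᵀ = -(Q x)) ∧
    ∀ i : Fin n, ∀ x : Fin n → ℝ, (∀ k : Fin n, 0 < x k) →
      ∑ j : Fin n, (Q x i j * fderiv ℝ f x (Pi.single j 1)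
        + f x * fderiv ℝ (fun y => Q y i j) x (Pi.single j 1)) = 0 := by
  obtain rfl : Q = Volterra.secondStructure := funext fun x => Matrix.ext (hQ x)
  obtain rfl : f = fun y => (∏ k, y k) ^ (-(3 : ℝ) / 2) := funext hf
  exact ⟨fun x _ => Volterra.secondStructure_transpose x,
    fun i x hx => Volterra.sum_secondStructure_mul_fderiv_add_eq_zero hn i hx⟩
end
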